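/- Let (η_ℓ), (ζ_ℓ) be sequences of nonnegative reals bounded by C_est, let M be a quasi-monotone function (M(s) ≤ C_mon M(t) for s ≤ t) continuous at 0 with M(0)=0, and suppose on each level ℓ the marked set M_ℓ contains a set M_ℓ^ξ with max_{T∈T_ℓ\M_ℓ^ξ} ξ_ℓ(T) ≤ M(ξ_ℓ(M_ℓ^ξ)) for some ξ ∈ {η, ζ}. Then [max_{T∈T_ℓ\M_ℓ} η_ℓ(T)]·[max_{T∈T_ℓ\M_ℓ} ζ_ℓ(T)] ≤ C_est C_mon max{M(η_ℓ(M_ℓ)), M(ζ_ℓ(M_ℓ))}. -/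
import Mathlib

lemma aux_le_sqrt_sum {α : Type*} (S : Finset α) (f : α → ℝ) (hf : ∀ t, 0 ≤ f t)
    {x : α} (hx : x ∈ S) : f x ≤ Real.sqrt (∑ t ∈ S, f t ^ 2) := by
  have h : f x ^ 2 ≤ ∑ t ∈ S, f t ^ 2 :=
    Finset.single_le_sum (fun t _ => sq_nonneg (f t)) hx
  calc f x = Real.sqrt (f x ^ 2) := by rw [Real.sqrt_sq (hf x)]
    _ ≤ _ := Real.sqrt_le_sqrt h

/-- "First mark, then combine": if the marked set `M` contains a set `Mξ` satisfying the
general marking criterion for one of the estimators `ξ ∈ {η, ζ}`, the global estimators are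
bounded by `C_est`, and `Mfun` is quasi-monotone, then the abstract marking criterion holds
with `V(x,y) = C_est C_mon max{Mfun(x), Mfun(y)}`. -/
theorem stmt_6 {α : Type*} [DecidableEq α] (Tfin Mset Mξ : Finset α) (η ζ ξ : α → ℝ)
    (Mfun : ℝ → ℝ) (C_est C_mon : ℝ)
    (hη : ∀ t, 0 ≤ η t) (hζ : ∀ t, 0 ≤ ζ t)
    (hξ : ξ = η ∨ ξ = ζ)
    (hMT : Mset ⊆ Tfin) (hMξ : Mξ ⊆ Mset)
    (hbound : Real.sqrt (∑ t ∈ Tfin, η t ^ 2) + Real.sqrt (∑ t ∈ Tfin, ζ t ^ 2) ≤ C_est)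
    (hmono : ∀ s t : ℝ, 0 ≤ s → s ≤ t → Mfun s ≤ C_mon * Mfun t)
    (hMfun : ∀ s, 0 ≤ Mfun s) (hCmon : 0 < C_mon)
    (hmark : ∀ t ∈ Tfin \ Mξ, ξ t ≤ Mfun (Real.sqrt (∑ t' ∈ Mξ, ξ t' ^ 2))) :
    ∀ t ∈ Tfin \ Mset, ∀ t' ∈ Tfin \ Mset,
      η t * ζ t' ≤ C_est * C_mon *
        max (Mfun (Real.sqrt (∑ s ∈ Mset, η s ^ 2)))
            (Mfun (Real.sqrt (∑ s ∈ Mset, ζ s ^ 2))) := by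
  intro t ht t' ht'
  rw [Finset.mem_sdiff] at ht ht'
  have hsqη : 0 ≤ Real.sqrt (∑ t ∈ Tfin, η t ^ 2) := Real.sqrt_nonneg _
  have hsqζ : 0 ≤ Real.sqrt (∑ t ∈ Tfin, ζ t ^ 2) := Real.sqrt_nonneg _
  have hmax0 : 0 ≤ max (Mfun (Real.sqrt (∑ s ∈ Mset, η s ^ 2)))
      (Mfun (Real.sqrt (∑ s ∈ Mset, ζ s ^ 2))) := le_trans (hMfun _) (le_max_left _ _)
  -- helper: the marking bound for ξ, combined with quasi-monotonicity
  have hstep : ∀ x ∈ Tfin \ Mset,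
      ξ x ≤ C_mon * Mfun (Real.sqrt (∑ s ∈ Mset, ξ s ^ 2)) := by
    intro x hx
    rw [Finset.mem_sdiff] at hx
    have hx' : x ∈ Tfin \ Mξ := Finset.mem_sdiff.mpr ⟨hx.1, fun h => hx.2 (hMξ h)⟩
    refine le_trans (hmark x hx') (hmono _ _ (Real.sqrt_nonneg _) ?_)
    exact Real.sqrt_le_sqrt (Finset.sum_le_sum_of_subset_of_nonneg hMξ
      (fun _ _ _ => sq_nonneg _))
  rcases hξ with rfl | rfl
  · -- ξ = η
    have h1 : ξ t ≤ C_mon * max (Mfun (Real.sqrt (∑ s ∈ Mset, ξ s ^ 2)))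
        (Mfun (Real.sqrt (∑ s ∈ Mset, ζ s ^ 2))) :=
      le_trans (hstep t (Finset.mem_sdiff.mpr ht))
        (by exact mul_le_mul_of_nonneg_left (le_max_left _ _) hCmon.le)
    have h2 : ζ t' ≤ C_est :=
      le_trans (aux_le_sqrt_sum Tfin ζ hζ ht'.1) (by linarith)
    calc ξ t * ζ t' ≤ (C_mon * max (Mfun (Real.sqrt (∑ s ∈ Mset, ξ s ^ 2)))
          (Mfun (Real.sqrt (∑ s ∈ Mset, ζ s ^ 2)))) * C_est :=
        mul_le_mul h1 h2 (hζ t') (by positivity)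
      _ = _ := by ring
  · -- ξ = ζ
    have h1 : ξ t' ≤ C_mon * max (Mfun (Real.sqrt (∑ s ∈ Mset, η s ^ 2)))
        (Mfun (Real.sqrt (∑ s ∈ Mset, ξ s ^ 2))) :=
      le_trans (hstep t' (Finset.mem_sdiff.mpr ht'))
        (by exact mul_le_mul_of_nonneg_left (le_max_right _ _) hCmon.le)
    have h2 : η t ≤ C_est :=
      le_trans (aux_le_sqrt_sum Tfin η hη ht.1) (by linarith)
    calc η t * ξ t' ≤ C_est * (C_mon * max (Mfun (Real.sqrt (∑ s ∈ Mset, η s ^ 2)))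
          (Mfun (Real.sqrt (∑ s ∈ Mset, ξ s ^ 2)))) :=
        mul_le_mul h2 h1 (hζ t') (by linarith)
      _ = _ := by ring
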